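/- arXiv:1611.00143 — 9 statements merged into one kernel-verified Lean document; each statement's English description precedes it below -/
import Mathlib

section
/- Let t, λ, α be real numbers with 1 − λα > 0, and let g_i, g_j be complex numbers with g_j ≠ g_i; write dg := g_j − g_i. Assume T_i := 1 + t|g_i|² > 0, T_j := 1 + t|g_j|² > 0, and |dg|²(1−t) + T_i T_j λα ≠ 0. Let E_i be any 2×2 complex matrix with det E_i = 1, and set E_j := (1−λα)^{−1/2} · E_i · [[1, dg],[λα/dg, 1]]. For m ∈ {i,j} set L_m := [[0, √(T_m)],[−1/√(T_m), −t·conj(g_m)/√(T_m)]], f_m := (E_m L_m)(E_m L_m)^* and n_m := (E_m L_m)·diag(1,−1)·(E_m L_m)^*, where ^* denotes conjugate transpose. Then n_j − n_i = −κ·(f_j − f_i), where κ = (−|dg|²(1+t) + T_i T_j λα)/(|dg|²(1−t) + T_i T_j λα). -/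
open Matrix Complex

private lemma mulLLH (t T : ℝ) (hT : 0 < T) (g : ℂ) :
    !![0, ((Real.sqrt T : ℝ) : ℂ); -1 / ((Real.sqrt T : ℝ) : ℂ),
        -(t : ℂ) * (starRingEnd ℂ) g / ((Real.sqrt T : ℝ) : ℂ)] *
      !![0, ((Real.sqrt T : ℝ) : ℂ); -1 / ((Real.sqrt T : ℝ) : ℂ),
        -(t : ℂ) * (starRingEnd ℂ) g / ((Real.sqrt T : ℝ) : ℂ)]ᴴ =
    !![(T : ℂ), -(t : ℂ) * g;
       -(t : ℂ) * (starRingEnd ℂ) g, (1 + (t : ℂ) ^ 2 * (g * (starRingEnd ℂ) g)) / (T : ℂ)] := by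
  have h0 : ((Real.sqrt T : ℝ) : ℂ) ≠ 0 :=
    Complex.ofReal_ne_zero.mpr (Real.sqrt_ne_zero'.mpr hT)
  have h2 : ((Real.sqrt T : ℝ) : ℂ) * ((Real.sqrt T : ℝ) : ℂ) = (T : ℂ) := by
    rw [← Complex.ofReal_mul, Real.mul_self_sqrt hT.le]
  rw [← h2]
  ext i j
  fin_cases i <;> fin_cases j <;>
    · simp [Matrix.mul_apply, Fin.sum_univ_two, Matrix.conjTranspose_apply,
        Complex.conj_ofReal, _root_.map_mul, map_div₀]
      try field_simp
      try ring

private lemma mulLPLH (t T : ℝ) (hT : 0 < T) (g : ℂ) :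
    !![0, ((Real.sqrt T : ℝ) : ℂ); -1 / ((Real.sqrt T : ℝ) : ℂ),
        -(t : ℂ) * (starRingEnd ℂ) g / ((Real.sqrt T : ℝ) : ℂ)] * !![(1 : ℂ), 0; 0, -1] *
      !![0, ((Real.sqrt T : ℝ) : ℂ); -1 / ((Real.sqrt T : ℝ) : ℂ),
        -(t : ℂ) * (starRingEnd ℂ) g / ((Real.sqrt T : ℝ) : ℂ)]ᴴ =
    !![-(T : ℂ), (t : ℂ) * g;
       (t : ℂ) * (starRingEnd ℂ) g, (1 - (t : ℂ) ^ 2 * (g * (starRingEnd ℂ) g)) / (T : ℂ)] := by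
  have h0 : ((Real.sqrt T : ℝ) : ℂ) ≠ 0 :=
    Complex.ofReal_ne_zero.mpr (Real.sqrt_ne_zero'.mpr hT)
  have h2 : ((Real.sqrt T : ℝ) : ℂ) * ((Real.sqrt T : ℝ) : ℂ) = (T : ℂ) := by
    rw [← Complex.ofReal_mul, Real.mul_self_sqrt hT.le]
  rw [← h2]
  ext i j
  fin_cases i <;> fin_cases j <;>
    · simp [Matrix.mul_apply, Fin.sum_univ_two, Matrix.conjTranspose_apply,
        Complex.conj_ofReal, _root_.map_mul, map_div₀]
      try field_simp
      try ring



set_option maxHeartbeats 1600000 in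
private lemma coreId (t lam alpha : ℝ) (hla : 1 - lam * alpha > 0)
    (gi gj : ℂ) (hgij : gj ≠ gi)
    (Ti Tj : ℝ)
    (hTi : Ti = 1 + t * ‖gi‖ ^ 2)
    (hTj : Tj = 1 + t * ‖gj‖ ^ 2)
    (hTipos : Ti > 0) (hTjpos : Tj > 0)
    (hden : ‖gj - gi‖ ^ 2 * (1 - t) + Ti * Tj * (lam * alpha) ≠ 0)
    (κ : ℝ)
    (hκ : κ = (-(‖gj - gi‖ ^ 2) * (1 + t) + Ti * Tj * (lam * alpha)) /
      (‖gj - gi‖ ^ 2 * (1 - t) + Ti * Tj * (lam * alpha)))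
    (A J1 J2 J3 J4 : Matrix (Fin 2) (Fin 2) ℂ)
    (hA : A = !![1, gj - gi; ((lam * alpha : ℝ) : ℂ) / (gj - gi), 1])
    (hJ1 : J1 = !![(Ti : ℂ), -(t : ℂ) * gi;
      -(t : ℂ) * (starRingEnd ℂ) gi, (1 + (t : ℂ) ^ 2 * (gi * (starRingEnd ℂ) gi)) / (Ti : ℂ)])
    (hJ2 : J2 = !![-(Ti : ℂ), (t : ℂ) * gi;
      (t : ℂ) * (starRingEnd ℂ) gi, (1 - (t : ℂ) ^ 2 * (gi * (starRingEnd ℂ) gi)) / (Ti : ℂ)])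
    (hJ3 : J3 = !![(Tj : ℂ), -(t : ℂ) * gj;
      -(t : ℂ) * (starRingEnd ℂ) gj, (1 + (t : ℂ) ^ 2 * (gj * (starRingEnd ℂ) gj)) / (Tj : ℂ)])
    (hJ4 : J4 = !![-(Tj : ℂ), (t : ℂ) * gj;
      (t : ℂ) * (starRingEnd ℂ) gj, (1 - (t : ℂ) ^ 2 * (gj * (starRingEnd ℂ) gj)) / (Tj : ℂ)]) :
    (((1 - lam * alpha)⁻¹ : ℝ) : ℂ) • (A * J4 * Aᴴ) - J2 =
      -((κ : ℂ)) • ((((1 - lam * alpha)⁻¹ : ℝ) : ℂ) • (A * J3 * Aᴴ) - J1) := by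
  subst hA hJ1 hJ2 hJ3 hJ4
  have habs : ∀ z : ℂ, ((‖z‖ : ℝ) : ℂ) ^ 2 = z * (starRingEnd ℂ) z := fun z => by
    rw [Complex.mul_conj, ← Complex.ofReal_pow, Complex.sq_norm]
  have hdg0 : gj - gi ≠ 0 := sub_ne_zero.mpr hgij
  have hcdg0 : (starRingEnd ℂ) gj - (starRingEnd ℂ) gi ≠ 0 :=
    sub_ne_zero.mpr fun h => hgij (by simpa using congrArg (starRingEnd ℂ) h)
  have hTiC : (Ti : ℂ) = 1 + (t : ℂ) * (gi * (starRingEnd ℂ) gi) := by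
    rw [hTi]; push_cast; rw [habs]
  have hTjC : (Tj : ℂ) = 1 + (t : ℂ) * (gj * (starRingEnd ℂ) gj) := by
    rw [hTj]; push_cast; rw [habs]
  have hTi0 : (Ti : ℂ) ≠ 0 := Complex.ofReal_ne_zero.mpr hTipos.ne'
  have hTj0 : (Tj : ℂ) ≠ 0 := Complex.ofReal_ne_zero.mpr hTjpos.ne'
  have hs0 : ((1 - lam * alpha : ℝ) : ℂ) ≠ 0 := Complex.ofReal_ne_zero.mpr (ne_of_gt hla)
  have hs0' : (1 : ℂ) - (lam : ℂ) * (alpha : ℂ) ≠ 0 := by push_cast at hs0; exact hs0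
  have hκC : (κ : ℂ) =
      (-((gj - gi) * ((starRingEnd ℂ) gj - (starRingEnd ℂ) gi)) * (1 + (t : ℂ)) +
        (Ti : ℂ) * (Tj : ℂ) * ((lam : ℂ) * (alpha : ℂ))) /
      ((gj - gi) * ((starRingEnd ℂ) gj - (starRingEnd ℂ) gi) * (1 - (t : ℂ)) +
        (Ti : ℂ) * (Tj : ℂ) * ((lam : ℂ) * (alpha : ℂ))) := by
    rw [hκ]; push_cast; rw [habs, map_sub]
  have hDC : ((gj - gi) * ((starRingEnd ℂ) gj - (starRingEnd ℂ) gi) * (1 - (t : ℂ)) +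
      (Ti : ℂ) * (Tj : ℂ) * ((lam : ℂ) * (alpha : ℂ))) ≠ 0 := by
    have h := Complex.ofReal_ne_zero.mpr hden
    push_cast at h
    rw [habs, map_sub] at h
    exact h
  rw [hTiC, hTjC] at hDC
  have hTi0' : (1 : ℂ) + (t : ℂ) * (gi * (starRingEnd ℂ) gi) ≠ 0 := by
    rw [← hTiC]; exact hTi0
  have hTj0' : (1 : ℂ) + (t : ℂ) * (gj * (starRingEnd ℂ) gj) ≠ 0 := by
    rw [← hTjC]; exact hTj0
  have hTi0'' : (1 : ℂ) + gi * (starRingEnd ℂ) gi * (t : ℂ) ≠ 0 := by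
    intro h; apply hTi0'; linear_combination h
  have hTj0'' : (1 : ℂ) + gj * (starRingEnd ℂ) gj * (t : ℂ) ≠ 0 := by
    intro h; apply hTj0'; linear_combination h
  have hκD : (κ : ℂ) *
      ((gj - gi) * ((starRingEnd ℂ) gj - (starRingEnd ℂ) gi) * (1 - (t : ℂ)) +
        (1 + (t : ℂ) * (gi * (starRingEnd ℂ) gi)) * (1 + (t : ℂ) * (gj * (starRingEnd ℂ) gj)) *
          ((lam : ℂ) * (alpha : ℂ))) =
      (-((gj - gi) * ((starRingEnd ℂ) gj - (starRingEnd ℂ) gi)) * (1 + (t : ℂ)) +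
        (1 + (t : ℂ) * (gi * (starRingEnd ℂ) gi)) * (1 + (t : ℂ) * (gj * (starRingEnd ℂ) gj)) *
          ((lam : ℂ) * (alpha : ℂ))) := by
    rw [hκC, hTiC, hTjC, div_mul_cancel₀ _ hDC]
  apply smul_right_injective (Matrix (Fin 2) (Fin 2) ℂ) hDC
  simp only [smul_smul]
  rw [mul_neg, mul_comm _ ((κ : ℂ)), hκD]
  ext i j
  fin_cases i <;> fin_cases j <;>
    · simp [Matrix.sub_apply, Matrix.smul_apply, Matrix.neg_apply, Matrix.mul_apply,
        Fin.sum_univ_two, Matrix.conjTranspose_apply, Matrix.of_apply, Matrix.cons_val',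
        Matrix.cons_val_zero, Matrix.cons_val_one, Matrix.head_cons, Matrix.head_fin_const,
        Matrix.empty_val', Matrix.cons_val_fin_one, smul_eq_mul, Complex.star_def, map_div₀,
        _root_.map_mul, map_sub, _root_.map_one, Complex.conj_ofReal, Complex.conj_conj,
        Matrix.vecHead, Matrix.vecTail, Matrix.vecMul, dotProduct]
      simp only [hTiC, hTjC]
      field_simp [hdg0, hcdg0, hTi0', hTj0', hs0', hTi0'', hTj0'']
      ring




/-- Edge relation for the discrete Weierstrass-type representation of discrete
linear Weingarten surfaces of Bryant type (Lemma 5.1, item 1). -/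
theorem stmt_0 (t lam alpha : ℝ) (hla : 1 - lam * alpha > 0)
    (gi gj : ℂ) (hgij : gj ≠ gi) (dg : ℂ) (hdg : dg = gj - gi)
    (Ti Tj : ℝ)
    (hTi : Ti = 1 + t * ‖gi‖ ^ 2)
    (hTj : Tj = 1 + t * ‖gj‖ ^ 2)
    (hTipos : Ti > 0) (hTjpos : Tj > 0)
    (hden : ‖dg‖ ^ 2 * (1 - t) + Ti * Tj * (lam * alpha) ≠ 0)
    (Ei Ej Li Lj fi fj ni nj : Matrix (Fin 2) (Fin 2) ℂ)
    (hEi : Ei.det = 1)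
    (hEj : Ej = (((Real.sqrt (1 - lam * alpha))⁻¹ : ℝ) : ℂ) •
      (Ei * !![1, dg; ((lam * alpha : ℝ) : ℂ) / dg, 1]))
    (hLi : Li = !![0, ((Real.sqrt Ti : ℝ) : ℂ);
      -1 / ((Real.sqrt Ti : ℝ) : ℂ), -(t : ℂ) * (starRingEnd ℂ) gi / ((Real.sqrt Ti : ℝ) : ℂ)])
    (hLj : Lj = !![0, ((Real.sqrt Tj : ℝ) : ℂ);
      -1 / ((Real.sqrt Tj : ℝ) : ℂ), -(t : ℂ) * (starRingEnd ℂ) gj / ((Real.sqrt Tj : ℝ) : ℂ)])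
    (hfi : fi = (Ei * Li) * (Ei * Li)ᴴ)
    (hfj : fj = (Ej * Lj) * (Ej * Lj)ᴴ)
    (hni : ni = (Ei * Li) * !![(1 : ℂ), 0; 0, -1] * (Ei * Li)ᴴ)
    (hnj : nj = (Ej * Lj) * !![(1 : ℂ), 0; 0, -1] * (Ej * Lj)ᴴ)
    (κ : ℝ)
    (hκ : κ = (-(‖dg‖ ^ 2) * (1 + t) + Ti * Tj * (lam * alpha)) /
      (‖dg‖ ^ 2 * (1 - t) + Ti * Tj * (lam * alpha))) :
    nj - ni = -((κ : ℂ)) • (fj - fi) := by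
  subst hdg
  have hcc : (((Real.sqrt (1 - lam * alpha))⁻¹ : ℝ) : ℂ) *
      (((Real.sqrt (1 - lam * alpha))⁻¹ : ℝ) : ℂ) = ((((1 - lam * alpha)⁻¹ : ℝ)) : ℂ) := by
    rw [← Complex.ofReal_mul, ← mul_inv, Real.mul_self_sqrt hla.le]
  have h1 := mulLLH t Ti hTipos gi
  have h2 := mulLPLH t Ti hTipos gi
  have h3 := mulLLH t Tj hTjpos gj
  have h4 := mulLPLH t Tj hTjpos gj
  rw [← hLi] at h1 h2
  rw [← hLj] at h3 h4
  set u : ℂ := ((((1 - lam * alpha)⁻¹ : ℝ)) : ℂ) with hu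
  set A : Matrix (Fin 2) (Fin 2) ℂ :=
    !![1, gj - gi; ((lam * alpha : ℝ) : ℂ) / (gj - gi), 1] with hA
  have hfi' : fi = Ei * (Li * Liᴴ) * Eiᴴ := by
    rw [hfi, Matrix.conjTranspose_mul]
    simp only [Matrix.mul_assoc]
  have hni' : ni = Ei * (Li * !![(1 : ℂ), 0; 0, -1] * Liᴴ) * Eiᴴ := by
    rw [hni, Matrix.conjTranspose_mul]
    simp only [Matrix.mul_assoc]
  have hfj' : fj = u • (Ei * (A * (Lj * Ljᴴ) * Aᴴ) * Eiᴴ) := by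
    rw [hfj, hEj]
    simp only [Matrix.conjTranspose_mul, Matrix.conjTranspose_smul, Matrix.smul_mul,
      Matrix.mul_smul, smul_smul, Matrix.mul_assoc, Complex.star_def, Complex.conj_ofReal]
    rw [hcc]
  have hnj' : nj = u • (Ei * (A * (Lj * !![(1 : ℂ), 0; 0, -1] * Ljᴴ) * Aᴴ) * Eiᴴ) := by
    rw [hnj, hEj]
    simp only [Matrix.conjTranspose_mul, Matrix.conjTranspose_smul, Matrix.smul_mul,
      Matrix.mul_smul, smul_smul, Matrix.mul_assoc, Complex.star_def, Complex.conj_ofReal]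
    rw [hcc]
  rw [hfi', hni', hfj', hnj', h1, h2, h3, h4]
  have pack : ∀ X Y : Matrix (Fin 2) (Fin 2) ℂ,
      u • (Ei * X * Eiᴴ) - Ei * Y * Eiᴴ = Ei * (u • X - Y) * Eiᴴ := fun X Y => by
    simp only [Matrix.mul_sub, Matrix.sub_mul, Matrix.mul_smul, Matrix.smul_mul,
      Matrix.mul_assoc]
  rw [pack, pack]
  rw [coreId t lam alpha hla gi gj hgij Ti Tj hTi hTj hTipos hTjpos hden κ hκ
    A _ _ _ _ hA rfl rfl rfl rfl]
  simp only [Matrix.mul_smul, Matrix.smul_mul]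
  rfl
end

section
/- Let V be a real vector space, let u, w, v, x ∈ V, and let κ_{ij}, κ_{jk}, κ_{iℓ}, κ_{kℓ} be real numbers with κ_{jk} ≠ κ_{kℓ} and D := κ_{ij} − κ_{iℓ} − κ_{jk} + κ_{kℓ} ≠ 0. Assume u + w = v + x and κ_{ij}·u + κ_{jk}·w = κ_{iℓ}·v + κ_{kℓ}·x. Set df_{ik} := u + w, df_{jℓ} := v − u, dn_{ik} := −κ_{ij}·u − κ_{jk}·w, dn_{jℓ} := −κ_{iℓ}·v + κ_{ij}·u. Then in the exterior algebra of V: (1/4)·(df_{ik} ∧ dn_{jℓ} + dn_{ik} ∧ df_{jℓ}) = −H · (1/2)·(df_{ik} ∧ df_{jℓ}), where H = (κ_{ij}κ_{kℓ} − κ_{iℓ}κ_{jk})/D. -/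
open ExteriorAlgebra

lemma wedge_lin (V : Type*) [AddCommGroup V] [Module ℝ V] (u v : V) (a b c d : ℝ) :
    ExteriorAlgebra.ι ℝ (a • u + b • v) * ExteriorAlgebra.ι ℝ (c • u + d • v)
      = (a * d - b * c) • (ExteriorAlgebra.ι ℝ u * ExteriorAlgebra.ι ℝ v) := by
  have hswap : ExteriorAlgebra.ι ℝ v * ExteriorAlgebra.ι ℝ u
      = -(ExteriorAlgebra.ι ℝ u * ExteriorAlgebra.ι ℝ v) := by
    have := ExteriorAlgebra.ι_add_mul_swap (R := ℝ) u v
    linear_combination (norm := noncomm_ring) this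
  simp only [map_add, map_smul, add_mul, mul_add, smul_mul_assoc, mul_smul_comm,
    ExteriorAlgebra.ι_sq_zero, smul_zero, hswap, smul_neg]
  module

/-- Mean-curvature half of Lemma 5.3: the mixed area form of a quadrilateral
equals -H times the area form, with H given by the edge principal curvatures. -/
theorem stmt_2 (V : Type*) [AddCommGroup V] [Module ℝ V]
    (u w v x : V) (kij kjk kil kkl : ℝ)
    (hk : kjk ≠ kkl)
    (hD : kij - kil - kjk + kkl ≠ 0)
    (hf : u + w = v + x)
    (hn : kij • u + kjk • w = kil • v + kkl • x)
    (dfik dfjl dnik dnjl : V)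
    (hdfik : dfik = u + w)
    (hdfjl : dfjl = v - u)
    (hdnik : dnik = -(kij • u) - kjk • w)
    (hdnjl : dnjl = -(kil • v) + kij • u)
    (H : ℝ)
    (hH : H = (kij * kkl - kil * kjk) / (kij - kil - kjk + kkl)) :
    (1/4 : ℝ) • (ExteriorAlgebra.ι ℝ dfik * ExteriorAlgebra.ι ℝ dnjl
        + ExteriorAlgebra.ι ℝ dnik * ExteriorAlgebra.ι ℝ dfjl)
      = -H • ((1/2 : ℝ) • (ExteriorAlgebra.ι ℝ dfik * ExteriorAlgebra.ι ℝ dfjl)) := by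
  have hk' : kjk - kkl ≠ 0 := sub_ne_zero.mpr hk
  set c : ℝ := (kjk - kkl)⁻¹ with hc
  have hw : w = (c * (kkl - kij)) • u + (c * (kil - kkl)) • v := by
    have hx : x = u + w - v := by
      rw [hf]; abel
    rw [hx] at hn
    have h2 : (kjk - kkl) • w = (kkl - kij) • u + (kil - kkl) • v := by
      have := hn
      rw [smul_sub, smul_add] at this
      rw [sub_smul, sub_smul, sub_smul]
      linear_combination (norm := module) this
    have := congrArg (fun z => c • z) h2
    simpa [smul_smul, hc, inv_mul_cancel₀ hk', smul_add] using this
  have hfik : dfik = (1 + c * (kkl - kij)) • u + (c * (kil - kkl)) • v := by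
    rw [hdfik, hw]; module
  have hfjl : dfjl = (-1 : ℝ) • u + (1 : ℝ) • v := by
    rw [hdfjl]; module
  have hnik : dnik = (-kij - kjk * (c * (kkl - kij))) • u + (-(kjk * (c * (kil - kkl)))) • v := by
    rw [hdnik, hw]; module
  have hnjl : dnjl = kij • u + (-kil) • v := by
    rw [hdnjl]; module
  rw [hfik, hfjl, hnik, hnjl, wedge_lin, wedge_lin, wedge_lin]
  rw [← add_smul, smul_smul, smul_smul, smul_smul]
  congr 1
  subst hH
  rw [hc]
  field_simp
  ring
end

section
/- Let V be a real vector space, let u, w, v, x ∈ V, and let κ_{ij}, κ_{jk}, κ_{iℓ}, κ_{kℓ} be nonzero real numbers with κ_{jk} ≠ κ_{kℓ} and D := κ_{ij} − κ_{iℓ} − κ_{jk} + κ_{kℓ} ≠ 0. Assume u + w = v + x and κ_{ij}·u + κ_{jk}·w = κ_{iℓ}·v + κ_{kℓ}·x. Set df_{ik} := u + w, df_{jℓ} := v − u, dn_{ik} := −κ_{ij}·u − κ_{jk}·w, dn_{jℓ} := −κ_{iℓ}·v + κ_{ij}·u. Then in the exterior algebra of V: (1/2)·(dn_{ik} ∧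 dn_{jℓ}) = K · (1/2)·(df_{ik} ∧ df_{jℓ}), where K = (κ_{ij}κ_{jk}κ_{kℓ}κ_{iℓ}/D)·(−1/κ_{ij} + 1/κ_{jk} + 1/κ_{iℓ} − 1/κ_{kℓ}). -/
open ExteriorAlgebra

lemma wedge_combo (V : Type*) [AddCommGroup V] [Module ℝ V] (u v : V)
    (p q r s : ℝ) :
    ExteriorAlgebra.ι ℝ (p • u + q • v) * ExteriorAlgebra.ι ℝ (r • u + s • v)
      = (p * s - q * r) • (ExteriorAlgebra.ι ℝ u * ExteriorAlgebra.ι ℝ v) := by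
  have hvu : ExteriorAlgebra.ι ℝ v * ExteriorAlgebra.ι ℝ u
      = -(ExteriorAlgebra.ι ℝ u * ExteriorAlgebra.ι ℝ v) := by
    exact eq_neg_of_add_eq_zero_left (ExteriorAlgebra.ι_add_mul_swap v u)
  have hu : ExteriorAlgebra.ι ℝ u * ExteriorAlgebra.ι ℝ u = 0 :=
    ExteriorAlgebra.ι_sq_zero u
  have hv : ExteriorAlgebra.ι ℝ v * ExteriorAlgebra.ι ℝ v = 0 :=
    ExteriorAlgebra.ι_sq_zero v
  simp only [map_add, map_smul, add_mul, mul_add, smul_mul_assoc, mul_smul_comm,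
    hu, hv, hvu, smul_zero, smul_neg, smul_smul]
  module

/-- Gaussian-curvature half of Lemma 5.3: the area form of the Gauss map of a
quadrilateral equals K times the area form, with K given by the edge principal
curvatures. -/
theorem stmt_3 (V : Type*) [AddCommGroup V] [Module ℝ V]
    (u w v x : V) (kij kjk kil kkl : ℝ)
    (hkij : kij ≠ 0) (hkjk : kjk ≠ 0) (hkil : kil ≠ 0) (hkkl : kkl ≠ 0)
    (hk : kjk ≠ kkl)
    (hD : kij - kil - kjk + kkl ≠ 0)
    (hf : u + w = v + x)
    (hn : kij • u + kjk • w = kil • v + kkl • x)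
    (dfik dfjl dnik dnjl : V)
    (hdfik : dfik = u + w)
    (hdfjl : dfjl = v - u)
    (hdnik : dnik = -(kij • u) - kjk • w)
    (hdnjl : dnjl = -(kil • v) + kij • u)
    (K : ℝ)
    (hK : K = (kij * kjk * kkl * kil / (kij - kil - kjk + kkl)) *
      (-(1 / kij) + 1 / kjk + 1 / kil - 1 / kkl)) :
    (1/2 : ℝ) • (ExteriorAlgebra.ι ℝ dnik * ExteriorAlgebra.ι ℝ dnjl)
      = K • ((1/2 : ℝ) • (ExteriorAlgebra.ι ℝ dfik * ExteriorAlgebra.ι ℝ dfjl)) := by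
  have hbd : kjk - kkl ≠ 0 := sub_ne_zero.mpr hk
  -- solve for w
  have hx : x = u + w - v := by
    have h := hf.symm
    rw [← h]; abel
  have hw : w = ((kkl - kij) / (kjk - kkl)) • u + ((kil - kkl) / (kjk - kkl)) • v := by
    have h1 : (kjk - kkl) • w = (kkl - kij) • u + (kil - kkl) • v := by
      rw [hx] at hn
      linear_combination (norm := module) hn
    have h2 : w = (kjk - kkl)⁻¹ • ((kjk - kkl) • w) := by
      rw [smul_smul, inv_mul_cancel₀ hbd, one_smul]
    rw [h2, h1]
    module
  set s : ℝ := (kkl - kij) / (kjk - kkl)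
  set t : ℝ := (kil - kkl) / (kjk - kkl)
  have hdf : dfik = (1 + s) • u + t • v := by
    rw [hdfik, hw]; module
  have hdf2 : dfjl = (-1 : ℝ) • u + (1 : ℝ) • v := by
    rw [hdfjl]; module
  have hdn : dnik = (-kij - kjk * s) • u + (-(kjk * t)) • v := by
    rw [hdnik, hw]; module
  have hdn2 : dnjl = kij • u + (-kil) • v := by
    rw [hdnjl]; module
  rw [hdf, hdf2, hdn, hdn2, wedge_combo, wedge_combo, smul_smul, smul_smul, smul_smul]
  congr 1
  have hst : s = (kkl - kij) / (kjk - kkl) := rfl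
  have htt : t = (kil - kkl) / (kjk - kkl) := rfl
  rw [hK, hst, htt]
  field_simp
  ring
end

section
/- Let κ_{ij}, κ_{jk}, κ_{iℓ}, κ_{kℓ} be nonzero real numbers such that D := κ_{ij} − κ_{iℓ} − κ_{jk} + κ_{kℓ} ≠ 0 and D' := 1/κ_{ij} − 1/κ_{iℓ} − 1/κ_{jk} + 1/κ_{kℓ} ≠ 0. Define H := (κ_{ij}κ_{kℓ} − κ_{iℓ}κ_{jk})/D, K := (κ_{ij}κ_{jk}κ_{kℓ}κ_{iℓ}/D)·(−1/κ_{ij} + 1/κ_{jk} + 1/κ_{iℓ} − 1/κ_{kℓ}), and define H' and K' by the same two formulas with each κ replaced by its reciprocal 1/κ. Then K ≠ 0, K' = 1/K, and H' = H/K. -/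
/-- Equation (5.4): the face curvatures of the Gauss map (whose edge principal
curvatures are the reciprocals) satisfy K' = 1/K and H' = H/K. -/
theorem stmt_4 (kij kjk kil kkl : ℝ)
    (hkij : kij ≠ 0) (hkjk : kjk ≠ 0) (hkil : kil ≠ 0) (hkkl : kkl ≠ 0)
    (hD : kij - kil - kjk + kkl ≠ 0)
    (hD' : 1 / kij - 1 / kil - 1 / kjk + 1 / kkl ≠ 0)
    (H K H' K' : ℝ)
    (hH : H = (kij * kkl - kil * kjk) / (kij - kil - kjk + kkl))
    (hK : K = (kij * kjk * kkl * kil / (kij - kil - kjk + kkl)) *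
      (-(1 / kij) + 1 / kjk + 1 / kil - 1 / kkl))
    (hH' : H' = ((1 / kij) * (1 / kkl) - (1 / kil) * (1 / kjk)) /
      (1 / kij - 1 / kil - 1 / kjk + 1 / kkl))
    (hK' : K' = ((1 / kij) * (1 / kjk) * (1 / kkl) * (1 / kil) /
        (1 / kij - 1 / kil - 1 / kjk + 1 / kkl)) *
      (-(1 / (1 / kij)) + 1 / (1 / kjk) + 1 / (1 / kil) - 1 / (1 / kkl))) :
    K ≠ 0 ∧ K' = 1 / K ∧ H' = H / K := by
  set E : ℝ := kil * kjk * kkl - kij * kjk * kkl - kij * kil * kkl + kij * kil * kjk with hEdef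
  have hD'eq : 1 / kij - 1 / kil - 1 / kjk + 1 / kkl = E / (kij * kil * kjk * kkl) := by
    rw [hEdef]; field_simp
  have hP : kij * kil * kjk * kkl ≠ 0 :=
    mul_ne_zero (mul_ne_zero (mul_ne_zero hkij hkil) hkjk) hkkl
  have hE : E ≠ 0 := by
    intro h
    apply hD'
    rw [hD'eq, h, zero_div]
  -- closed forms
  have hKval : K = -E / (kij - kil - kjk + kkl) := by
    rw [hK]
    have : -(1 / kij) + 1 / kjk + 1 / kil - 1 / kkl
        = -(1 / kij - 1 / kil - 1 / kjk + 1 / kkl) := by ring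
    rw [this, hD'eq, hEdef]
    field_simp
  have hK'val : K' = -(kij - kil - kjk + kkl) / E := by
    rw [hK', hD'eq, one_div_one_div, one_div_one_div, one_div_one_div, one_div_one_div, hEdef]
    field_simp
    ring
  have hH'val : H' = -(kij * kkl - kil * kjk) / E := by
    rw [hH', hD'eq, hEdef]
    field_simp
    ring
  have hK0 : K ≠ 0 := by
    rw [hKval]
    exact div_ne_zero (neg_ne_zero.mpr hE) hD
  refine ⟨hK0, ?_, ?_⟩
  · rw [hK'val, hKval, one_div, inv_div, neg_div, div_neg]
  · rw [hH'val, hKval, hH, div_div_div_cancel_right₀ hD, neg_div, div_neg]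
end

section
/- Let t, λ, α, β be real numbers and let g_i, g_j, g_k, g_ℓ be complex numbers with g_i ≠ g_j, g_j ≠ g_k, g_k ≠ g_ℓ, g_ℓ ≠ g_i, satisfying the cross-ratio condition ((g_i − g_j)(g_k − g_ℓ))/((g_j − g_k)(g_ℓ − g_i)) = α/β (with β ≠ 0). Write T_m := 1 + t|g_m|² for each vertex m, and define on each edge κ_{mn} := (−|g_n − g_m|²(1+t) + T_m T_n λ α_{mn})/(|g_n − g_m|²(1−t) + T_m T_n λ α_{mn}), where α_{ij} = α_{ℓk} = α and α_{iℓ} = α_{jk} = β; assume all four denominators are nonzero and all four κ's are nonzero. Set κ'_{mn} := 1/κ_{mn}, assume D' := κ'_{ij} − κ'_{iℓ} − κ'_{jk} + κ'_{kℓ} ≠ 0, and define H_n := (κ'_{ij}κ'_{kℓ} − κ'_{iℓ}κ'_{jk})/D' and K_n := (κ'_{ij}κ'_{jk}κ'_{kℓ}κ'_{iℓ}/D')·(−1/κ'_{ij} + 1/κ'_{jk} + 1/κ'_{iℓ} − 1/κ'_{kℓ}). Then 2t(H_n − 1) − (1 + t)(K_n − 1) = 0. -/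
set_option maxHeartbeats 16000000 in
lemma weingarten_key (t A B C D a b c d kij kjk kkl kil kij' kjk' kkl' kil' Hn Kn : ℝ)
    (h1 : A * C * (b * d) = B * D * (a * c))
    (hdij : A * (1 - t) + a ≠ 0)
    (hdkl : C * (1 - t) + c ≠ 0)
    (hdil : D * (1 - t) + d ≠ 0)
    (hdjk : B * (1 - t) + b ≠ 0)
    (hkij : kij = (-A * (1 + t) + a) / (A * (1 - t) + a))
    (hkkl : kkl = (-C * (1 + t) + c) / (C * (1 - t) + c))
    (hkil : kil = (-D * (1 + t) + d) / (D * (1 - t) + d))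
    (hkjk : kjk = (-B * (1 + t) + b) / (B * (1 - t) + b))
    (hkij0 : kij ≠ 0) (hkjk0 : kjk ≠ 0) (hkil0 : kil ≠ 0) (hkkl0 : kkl ≠ 0)
    (hkij' : kij' = 1 / kij) (hkjk' : kjk' = 1 / kjk)
    (hkkl' : kkl' = 1 / kkl) (hkil' : kil' = 1 / kil)
    (hD' : kij' - kil' - kjk' + kkl' ≠ 0)
    (hHn : Hn = (kij' * kkl' - kil' * kjk') / (kij' - kil' - kjk' + kkl'))
    (hKn : Kn = (kij' * kjk' * kkl' * kil' / (kij' - kil' - kjk' + kkl')) *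
      (-(1 / kij') + 1 / kjk' + 1 / kil' - 1 / kkl')) :
    2 * t * (Hn - 1) - (1 + t) * (Kn - 1) = 0 := by
  subst hHn hKn hkij' hkjk' hkkl' hkil' hkij hkjk hkkl hkil
  have hnij : -A * (1 + t) + a ≠ 0 := by
    intro h; exact hkij0 (by rw [h, zero_div])
  have hnjk : -B * (1 + t) + b ≠ 0 := by
    intro h; exact hkjk0 (by rw [h, zero_div])
  have hnkl : -C * (1 + t) + c ≠ 0 := by
    intro h; exact hkkl0 (by rw [h, zero_div])
  have hnil : -D * (1 + t) + d ≠ 0 := by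
    intro h; exact hkil0 (by rw [h, zero_div])
  set nA := -A * (1 + t) + a with hnA
  set dA := A * (1 - t) + a with hdA
  set nB := -B * (1 + t) + b with hnB
  set dB := B * (1 - t) + b with hdB
  set nC := -C * (1 + t) + c with hnC
  set dC := C * (1 - t) + c with hdC
  set nD := -D * (1 + t) + d with hnD
  set dD := D * (1 - t) + d with hdD
  have hsum : 1 / (nA / dA) - 1 / (nD / dD) - 1 / (nB / dB) + 1 / (nC / dC)
      = (dA * (nB * (nC * nD)) - dD * (nA * (nB * nC)) - dB * (nA * (nC * nD))
          + dC * (nA * (nB * nD))) / (nA * (nB * (nC * nD))) := by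
    rw [one_div_div, one_div_div, one_div_div, one_div_div]
    field_simp
  have hDpN0 : dA * (nB * (nC * nD)) - dD * (nA * (nB * nC)) - dB * (nA * (nC * nD))
      + dC * (nA * (nB * nD)) ≠ 0 := fun h0 => hD' (by rw [hsum, h0, zero_div])
  have h5 : 1 / (nA / dA) * (1 / (nC / dC)) - 1 / (nD / dD) * (1 / (nB / dB))
      = (dA * dC * (nB * nD) - dD * dB * (nA * nC)) / (nA * (nB * (nC * nD))) := by
    rw [one_div_div, one_div_div, one_div_div, one_div_div]
    field_simp
  have h6 : 1 / (nA / dA) * (1 / (nB / dB)) * (1 / (nC / dC)) * (1 / (nD / dD))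
      = dA * (dB * (dC * dD)) / (nA * (nB * (nC * nD))) := by
    rw [one_div_div, one_div_div, one_div_div, one_div_div]
    field_simp
  have h7 : -(1 / (1 / (nA / dA))) + 1 / (1 / (nB / dB)) + 1 / (1 / (nD / dD))
        - 1 / (1 / (nC / dC))
      = (-(nA * (dB * (dC * dD))) + nB * (dA * (dC * dD)) + nD * (dA * (dB * dC))
          - nC * (dA * (dB * dD))) / (dA * (dB * (dC * dD))) := by
    rw [one_div_one_div, one_div_one_div, one_div_one_div, one_div_one_div]
    field_simp
  have hPN0 : nA * (nB * (nC * nD)) ≠ 0 := mul_ne_zero hnij (mul_ne_zero hnjk (mul_ne_zero hnkl hnil))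
  have hP0 : dA * (dB * (dC * dD)) ≠ 0 := mul_ne_zero hdij (mul_ne_zero hdjk (mul_ne_zero hdkl hdil))
  have h8 : ∀ x : ℝ, x / (nA * (nB * (nC * nD)))
      / ((dA * (nB * (nC * nD)) - dD * (nA * (nB * nC)) - dB * (nA * (nC * nD))
          + dC * (nA * (nB * nD))) / (nA * (nB * (nC * nD))))
      = x / (dA * (nB * (nC * nD)) - dD * (nA * (nB * nC)) - dB * (nA * (nC * nD))
          + dC * (nA * (nB * nD))) := by
    intro x
    exact div_div_div_cancel_right₀ hPN0 _ _
  have h9 : dA * (dB * (dC * dD)) / (dA * (nB * (nC * nD)) - dD * (nA * (nB * nC))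
        - dB * (nA * (nC * nD)) + dC * (nA * (nB * nD)))
      * ((-(nA * (dB * (dC * dD))) + nB * (dA * (dC * dD)) + nD * (dA * (dB * dC))
          - nC * (dA * (dB * dD))) / (dA * (dB * (dC * dD))))
      = (-(nA * (dB * (dC * dD))) + nB * (dA * (dC * dD)) + nD * (dA * (dB * dC))
          - nC * (dA * (dB * dD))) / (dA * (nB * (nC * nD)) - dD * (nA * (nB * nC))
          - dB * (nA * (nC * nD)) + dC * (nA * (nB * nD))) := by
    field_simp
  have hz2 : (2 * t * ((dA * dC * (nB * nD) - dD * dB * (nA * nC))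
        - (dA * (nB * (nC * nD)) - dD * (nA * (nB * nC)) - dB * (nA * (nC * nD))
            + dC * (nA * (nB * nD))))
      - (1 + t) * ((-(nA * (dB * (dC * dD))) + nB * (dA * (dC * dD)) + nD * (dA * (dB * dC))
          - nC * (dA * (dB * dD)))
        - (dA * (nB * (nC * nD)) - dD * (nA * (nB * nC)) - dB * (nA * (nC * nD))
            + dC * (nA * (nB * nD)))))
      / (dA * (nB * (nC * nD)) - dD * (nA * (nB * nC)) - dB * (nA * (nC * nD))
          + dC * (nA * (nB * nD))) = 0 := by
    rw [div_eq_zero_iff]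
    left
    rw [hnA, hdA, hnB, hdB, hnC, hdC, hnD, hdD]
    linear_combination (-8 : ℝ) * h1
  rw [hsum, h5, h6, h7, h8, h8, h9, ← hz2]
  rw [div_sub_one hDpN0, div_sub_one hDpN0]
  ring

/-- Second half of Lemma 5.5: the Gauss map in de Sitter 3-space of a discrete
surface with Weierstrass-type representation, whose edge principal curvatures
are the reciprocals, satisfies the linear Weingarten relation of Bianchi type
2t(H_n-1) - (1+t)(K_n-1) = 0. -/
theorem stmt_6 (t lam alpha beta : ℝ) (gi gj gk gl : ℂ)
    (hij : gi ≠ gj) (hjk : gj ≠ gk) (hkl : gk ≠ gl) (hli : gl ≠ gi)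
    (hbeta : beta ≠ 0)
    (hcr : ((gi - gj) * (gk - gl)) / ((gj - gk) * (gl - gi)) = ((alpha / beta : ℝ) : ℂ))
    (Ti Tj Tk Tl : ℝ)
    (hTi : Ti = 1 + t * ‖gi‖ ^ 2)
    (hTj : Tj = 1 + t * ‖gj‖ ^ 2)
    (hTk : Tk = 1 + t * ‖gk‖ ^ 2)
    (hTl : Tl = 1 + t * ‖gl‖ ^ 2)
    (kij kjk kkl kil : ℝ)
    (hdij : ‖gj - gi‖ ^ 2 * (1 - t) + Ti * Tj * (lam * alpha) ≠ 0)
    (hdlk : ‖gk - gl‖ ^ 2 * (1 - t) + Tl * Tk * (lam * alpha) ≠ 0)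
    (hdil : ‖gl - gi‖ ^ 2 * (1 - t) + Ti * Tl * (lam * beta) ≠ 0)
    (hdjk : ‖gk - gj‖ ^ 2 * (1 - t) + Tj * Tk * (lam * beta) ≠ 0)
    (hkij : kij = (-(‖gj - gi‖ ^ 2) * (1 + t) + Ti * Tj * (lam * alpha)) /
      (‖gj - gi‖ ^ 2 * (1 - t) + Ti * Tj * (lam * alpha)))
    (hkkl : kkl = (-(‖gk - gl‖ ^ 2) * (1 + t) + Tl * Tk * (lam * alpha)) /
      (‖gk - gl‖ ^ 2 * (1 - t) + Tl * Tk * (lam * alpha)))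
    (hkil : kil = (-(‖gl - gi‖ ^ 2) * (1 + t) + Ti * Tl * (lam * beta)) /
      (‖gl - gi‖ ^ 2 * (1 - t) + Ti * Tl * (lam * beta)))
    (hkjk : kjk = (-(‖gk - gj‖ ^ 2) * (1 + t) + Tj * Tk * (lam * beta)) /
      (‖gk - gj‖ ^ 2 * (1 - t) + Tj * Tk * (lam * beta)))
    (hkij0 : kij ≠ 0) (hkjk0 : kjk ≠ 0) (hkil0 : kil ≠ 0) (hkkl0 : kkl ≠ 0)
    (kij' kjk' kkl' kil' : ℝ)
    (hkij' : kij' = 1 / kij) (hkjk' : kjk' = 1 / kjk)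
    (hkkl' : kkl' = 1 / kkl) (hkil' : kil' = 1 / kil)
    (hD' : kij' - kil' - kjk' + kkl' ≠ 0)
    (Hn Kn : ℝ)
    (hHn : Hn = (kij' * kkl' - kil' * kjk') / (kij' - kil' - kjk' + kkl'))
    (hKn : Kn = (kij' * kjk' * kkl' * kil' / (kij' - kil' - kjk' + kkl')) *
      (-(1 / kij') + 1 / kjk' + 1 / kil' - 1 / kkl')) :
    2 * t * (Hn - 1) - (1 + t) * (Kn - 1) = 0 := by
  have hb' : (beta : ℂ) ≠ 0 := Complex.ofReal_ne_zero.2 hbeta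
  have hY : (gj - gk) * (gl - gi) ≠ 0 :=
    mul_ne_zero (sub_ne_zero.2 hjk) (sub_ne_zero.2 hli)
  have hcr' : (gi - gj) * (gk - gl) * (beta : ℂ) = (alpha : ℂ) * ((gj - gk) * (gl - gi)) := by
    push_cast at hcr
    rwa [div_eq_div_iff hY hb'] at hcr
  have habs := congrArg (fun z => ‖z‖ ^ 2) hcr'
  simp only [norm_mul, mul_pow, Complex.norm_real, Real.norm_eq_abs, _root_.sq_abs] at habs
  rw [norm_sub_rev gi gj, norm_sub_rev gj gk] at habs
  have h1 : ‖gj - gi‖ ^ 2 * ‖gk - gl‖ ^ 2 *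
        (Tj * Tk * (lam * beta) * (Ti * Tl * (lam * beta)))
      = ‖gk - gj‖ ^ 2 * ‖gl - gi‖ ^ 2 *
        (Ti * Tj * (lam * alpha) * (Tl * Tk * (lam * alpha))) := by
    linear_combination (Ti * Tj * Tk * Tl * lam ^ 2) * habs
  exact weingarten_key t (‖gj - gi‖ ^ 2) (‖gk - gj‖ ^ 2)
    (‖gk - gl‖ ^ 2) (‖gl - gi‖ ^ 2)
    (Ti * Tj * (lam * alpha)) (Tj * Tk * (lam * beta)) (Tl * Tk * (lam * alpha))
    (Ti * Tl * (lam * beta)) kij kjk kkl kil kij' kjk' kkl' kil' Hn Kn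
    h1 hdij hdlk hdil hdjk hkij hkkl hkil hkjk hkij0 hkjk0 hkil0 hkkl0
    hkij' hkjk' hkkl' hkil' hD' hHn hKn
end

section
/- Let t, θ, H, K be real numbers satisfying 2t(H − 1) + (1 − t)(K − 1) = 0, and assume Δ := cosh²θ − H·sinh(2θ) + K·sinh²θ ≠ 0. Define K^θ := (K·cosh²θ − H·sinh(2θ) + sinh²θ)/Δ and H^θ := −((K + 1)·sinh(2θ) − 2H·cosh(2θ))/(2Δ). Then, with T := e^{−2θ}·t, one has 2T(H^θ − 1) + (1 − T)(K^θ − 1) = 0. -/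
/-- Parallel surfaces of discrete Bryant-type linear Weingarten surfaces in
hyperbolic 3-space are again of Bryant type, with parameter T = e^{-2θ} t
(end of Section 5). -/
theorem stmt_7 (t θ H K : ℝ)
    (hLW : 2 * t * (H - 1) + (1 - t) * (K - 1) = 0)
    (hΔ : Real.cosh θ ^ 2 - H * Real.sinh (2 * θ) + K * Real.sinh θ ^ 2 ≠ 0)
    (Kθ Hθ : ℝ)
    (hKθ : Kθ = (K * Real.cosh θ ^ 2 - H * Real.sinh (2 * θ) + Real.sinh θ ^ 2) /
      (Real.cosh θ ^ 2 - H * Real.sinh (2 * θ) + K * Real.sinh θ ^ 2))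
    (hHθ : Hθ = -((K + 1) * Real.sinh (2 * θ) - 2 * H * Real.cosh (2 * θ)) /
      (2 * (Real.cosh θ ^ 2 - H * Real.sinh (2 * θ) + K * Real.sinh θ ^ 2))) :
    2 * (Real.exp (-(2 * θ)) * t) * (Hθ - 1) +
      (1 - Real.exp (-(2 * θ)) * t) * (Kθ - 1) = 0 := by
  have he : Real.exp θ ≠ 0 := (Real.exp_pos θ).ne'
  have h2 : Real.exp (2 * θ) = Real.exp θ ^ 2 := by rw [two_mul, Real.exp_add, sq]
  subst hKθ hHθ
  simp only [Real.cosh_eq, Real.sinh_eq, Real.exp_neg, h2] at *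
  set e := Real.exp θ with hee
  field_simp at hΔ
  replace hΔ := (div_ne_zero_iff.mp hΔ).1
  have hD : (e ^ 2 + 1) ^ 2 - 2 * (e ^ 4 - 1) * H + K * (e ^ 2 - 1) ^ 2 ≠ 0 := by
    convert hΔ using 2; ring
  field_simp [hD]
  linear_combination (4 * e ^ 4) * hLW
end

section
/- Let g_i, g_* be complex numbers with g_* ≠ g_i, and let α be a nonzero real number. Define df := (α/2)·(Re((1 − g_* g_i)/(g_* − g_i)), Re(i(1 + g_* g_i)/(g_* − g_i)), Re((g_* + g_i)/(g_* − g_i))) ∈ ℝ³, and define the stereographic Gauss map n(w) := (2 Re w, 2 Im w, |w|² − 1)/(1 + |w|²) ∈ ℝ³ for w ∈ ℂ. Then n(g_*) − n(g_i) = −κ·df, where κ := −4|g_* − g_i|²/(α·(1 + |g_i|²)(1 + |g_*|²)). -/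
set_option maxHeartbeats 1000000 in
/-- Edge principal-curvature relation for discrete minimal surfaces in
Euclidean 3-space (Section 7.2): the difference of the stereographic Gauss map
along an edge is -κ times the edge vector of the Weierstrass representation. -/
theorem stmt_12 (gi gs : ℂ) (hg : gs ≠ gi) (α : ℝ) (hα : α ≠ 0)
    (df : ℝ × ℝ × ℝ)
    (hdf : df = (α / 2) • ((((1 - gs * gi) / (gs - gi)).re,
      (Complex.I * (1 + gs * gi) / (gs - gi)).re,
      ((gs + gi) / (gs - gi)).re)))
    (n : ℂ → ℝ × ℝ × ℝ)
    (hn : ∀ w : ℂ, n w = ((1 + ‖w‖ ^ 2)⁻¹) •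
      (2 * w.re, 2 * w.im, ‖w‖ ^ 2 - 1))
    (κ : ℝ)
    (hκ : κ = -(4 * ‖gs - gi‖ ^ 2) /
      (α * (1 + ‖gi‖ ^ 2) * (1 + ‖gs‖ ^ 2))) :
    n gs - n gi = -κ • df := by
  subst hdf hκ
  rw [hn, hn]
  have habs : ∀ w : ℂ, ‖w‖ ^ 2 = w.re^2 + w.im^2 := by
    intro w; rw [Complex.sq_norm, Complex.normSq_apply]; ring
  set a := gi.re; set b := gi.im; set c := gs.re; set d := gs.im
  have hD : (c - a)^2 + (d - b)^2 ≠ 0 := by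
    intro h
    apply hg
    have h1 : c = a ∧ d = b := by
      constructor <;> nlinarith [sq_nonneg (c-a), sq_nonneg (d-b)]
    exact Complex.ext h1.1 h1.2
  have hNi : 1 + (a^2 + b^2) ≠ 0 := by positivity
  have hNs : 1 + (c^2 + d^2) ≠ 0 := by positivity
  simp only [habs, Prod.smul_mk, Prod.mk_sub_mk, smul_eq_mul, Complex.div_re,
    Complex.sub_re, Complex.sub_im, Complex.mul_re, Complex.mul_im,
    Complex.one_re, Complex.one_im, Complex.add_re, Complex.add_im,
    Complex.I_re, Complex.I_im, Complex.normSq_apply, Prod.mk.injEq]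
  have hD' : (c - a) * (c - a) + (d - b) * (d - b) ≠ 0 := by
    intro h; apply hD; nlinarith [h]
  have hD'' : (gs.re - gi.re) * (gs.re - gi.re) + (gs.im - gi.im) * (gs.im - gi.im) ≠ 0 := hD'
  have hNi' : 1 + (gi.re ^ 2 + gi.im ^ 2) ≠ 0 := hNi
  have hNs' : 1 + (gs.re ^ 2 + gs.im ^ 2) ≠ 0 := hNs
  simp only [a, b, c, d] at *
  refine ⟨?_, ?_, ?_⟩ <;> field_simp <;> ring
end

section
/- Let g_i, g_* be complex numbers with g_* ≠ g_i, |g_i| ≠ 1, |g_*| ≠ 1, and let α be a nonzero real number. Define df := (α/2)·(Re((1 + g_* g_i)/(g_* − g_i)), Re(i(1 − g_* g_i)/(g_* − g_i)), −Re((g_* + g_i)/(g_* − g_i))) ∈ ℝ³, and define the hyperboloid Gauss map n(w) := (2 Re w, 2 Im w, −(1 + |w|²))/(1 − |w|²) ∈ ℝ³ for w ∈ ℂ with |w| ≠ 1. Then n(g_*) − n(g_i) = −κ·df, where κ := −4|g_* − g_i|²/(α·(1 − |g_i|²)(1 − |g_*|²)). -/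
set_option maxHeartbeats 4000000 in
/-- Lemma 8.5: edge principal-curvature relation for discrete maximal surfaces
in Minkowski 3-space: the difference of the hyperboloid Gauss map along an edge
is -κ times the edge vector of the Weierstrass representation. -/

theorem stmt_13 (gi gs : ℂ) (hg : gs ≠ gi)
    (hgi : ‖gi‖ ≠ 1) (hgs : ‖gs‖ ≠ 1)
    (α : ℝ) (hα : α ≠ 0)
    (df : ℝ × ℝ × ℝ)
    (hdf : df = (α / 2) • ((((1 + gs * gi) / (gs - gi)).re,
      (Complex.I * (1 - gs * gi) / (gs - gi)).re,
      -(((gs + gi) / (gs - gi)).re))))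
    (n : ℂ → ℝ × ℝ × ℝ)
    (hn : ∀ w : ℂ, n w = ((1 - ‖w‖ ^ 2)⁻¹) •
      (2 * w.re, 2 * w.im, -(1 + ‖w‖ ^ 2)))
    (κ : ℝ)
    (hκ : κ = -(4 * ‖gs - gi‖ ^ 2) /
      (α * (1 - ‖gi‖ ^ 2) * (1 - ‖gs‖ ^ 2))) :
    n gs - n gi = -κ • df := by
  have hd : gs - gi ≠ 0 := sub_ne_zero.mpr hg
  have hns : Complex.normSq (gs - gi) ≠ 0 := fun h => hd (Complex.normSq_eq_zero.mp h)
  have h1 : (1 : ℝ) - ‖gi‖ ^ 2 ≠ 0 := by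
    intro h; apply hgi; nlinarith [norm_nonneg gi]
  have h2 : (1 : ℝ) - ‖gs‖ ^ 2 ≠ 0 := by
    intro h; apply hgs; nlinarith [norm_nonneg gs]
  subst hdf hκ
  rw [hn, hn]
  simp only [Complex.sq_norm, Prod.smul_mk, Prod.mk_sub_mk, Prod.mk.injEq,
    smul_eq_mul, Complex.div_re, Complex.mul_re, Complex.mul_im, Complex.add_re,
    Complex.add_im, Complex.sub_re, Complex.sub_im, Complex.one_re, Complex.one_im,
    Complex.I_re, Complex.I_im, Complex.normSq_apply]
  simp only [Complex.sq_norm, Complex.normSq_apply, Complex.sub_re, Complex.sub_im, ← sq] at hns h1 h2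
  refine ⟨?_, ?_, ?_⟩ <;> · field_simp [hns, h1, h2, hα]; ring
end

section
/- Let g₋, g, g₊ be complex numbers with g₋ ≠ g, g ≠ g₊, |g₋| ≠ 1, |g| ≠ 1, |g₊| ≠ 1, and let α₁, α₂ be real numbers with α₁·α₂ > 0. Set T₁ := (1 − |g₋|²)(1 − |g|²) and T₂ := (1 − |g|²)(1 − |g₊|²), and for λ ∈ ℝ with λ ≠ 0 define κ₁(λ) := (2|g − g₋|² + T₁λα₁)/(T₁λα₁) and κ₂(λ) := (2|g₊ − g|² + T₂λα₂)/(T₂λα₂). Then the following are equivalent: (i) there exists ε > 0 such that κ₁(λ)·κ₂(λ) < 0 for all λ with 0 < |λ| < ε; (ii) (1 − |g₋|²)(1 − |g₊|²) < 0, i.e., exactly one of |g₋|², |g₊|² is less than 1 and the other is greater than 1. -/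
lemma stmt_18_aux (x : ℂ) (hx : ‖x‖ ≠ 1) :
    (1 : ℝ) - ‖x‖ ^ 2 ≠ 0 := by
  intro h
  have h2 : (‖x‖ - 1) * (‖x‖ + 1) = 0 := by nlinarith
  rcases mul_eq_zero.mp h2 with h3 | h3
  · exact hx (by linarith)
  · nlinarith [norm_nonneg x]

/-- Theorem 9.3: for a discrete CMC 1 surface in de Sitter 3-space, the product
of the principal curvatures on two consecutive edges is negative for all λ
sufficiently close to zero iff exactly one of |g₋|², |g₊|² is less than 1 and
the other greater than 1. -/
theorem stmt_18 (gm g gp : ℂ) (h1 : gm ≠ g) (h2 : g ≠ gp)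
    (hm : ‖gm‖ ≠ 1) (h0 : ‖g‖ ≠ 1) (hp : ‖gp‖ ≠ 1)
    (α₁ α₂ : ℝ) (hα : α₁ * α₂ > 0)
    (T₁ T₂ : ℝ)
    (hT₁ : T₁ = (1 - ‖gm‖ ^ 2) * (1 - ‖g‖ ^ 2))
    (hT₂ : T₂ = (1 - ‖g‖ ^ 2) * (1 - ‖gp‖ ^ 2))
    (κ₁ κ₂ : ℝ → ℝ)
    (hκ₁ : ∀ lam : ℝ, lam ≠ 0 →
      κ₁ lam = (2 * ‖g - gm‖ ^ 2 + T₁ * lam * α₁) / (T₁ * lam * α₁))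
    (hκ₂ : ∀ lam : ℝ, lam ≠ 0 →
      κ₂ lam = (2 * ‖gp - g‖ ^ 2 + T₂ * lam * α₂) / (T₂ * lam * α₂)) :
    (∃ ε > 0, ∀ lam : ℝ, 0 < |lam| → |lam| < ε → κ₁ lam * κ₂ lam < 0) ↔
      (1 - ‖gm‖ ^ 2) * (1 - ‖gp‖ ^ 2) < 0 := by
  have hgm2 : (1 : ℝ) - ‖gm‖ ^ 2 ≠ 0 := stmt_18_aux gm hm
  have hg2 : (1 : ℝ) - ‖g‖ ^ 2 ≠ 0 := stmt_18_aux g h0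
  have hgp2 : (1 : ℝ) - ‖gp‖ ^ 2 ≠ 0 := stmt_18_aux gp hp
  set A : ℝ := 2 * ‖g - gm‖ ^ 2 with hAdef
  set B : ℝ := 2 * ‖gp - g‖ ^ 2 with hBdef
  have hA : 0 < A := by
    have := norm_pos_iff.mpr (sub_ne_zero.mpr (Ne.symm h1))
    nlinarith
  have hB : 0 < B := by
    have := norm_pos_iff.mpr (sub_ne_zero.mpr (Ne.symm h2))
    nlinarith
  set c₁ : ℝ := T₁ * α₁ with hc₁def
  set c₂ : ℝ := T₂ * α₂ with hc₂def
  have key : c₁ * c₂ =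
      ((1 - ‖gm‖ ^ 2) * (1 - ‖gp‖ ^ 2)) *
        ((1 - ‖g‖ ^ 2) ^ 2) * (α₁ * α₂) := by
    rw [hc₁def, hc₂def, hT₁, hT₂]; ring
  have hsq : 0 < (1 - ‖g‖ ^ 2) ^ 2 := pow_two_pos_of_ne_zero hg2
  constructor
  · rintro ⟨ε, hε, h⟩
    by_contra hS
    have hS' : 0 < (1 - ‖gm‖ ^ 2) * (1 - ‖gp‖ ^ 2) :=
      lt_of_le_of_ne (not_lt.mp hS) (Ne.symm (mul_ne_zero hgm2 hgp2))
    have hc : 0 < c₁ * c₂ := by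
      rw [key]; exact mul_pos (mul_pos hS' hsq) hα
    have hc₁ne : c₁ ≠ 0 := by
      intro hz; rw [hz, zero_mul] at hc; exact lt_irrefl 0 hc
    set lam : ℝ := if 0 < c₁ then ε / 2 else -(ε / 2) with hlamdef
    have hlamne : lam ≠ 0 := by
      rw [hlamdef]; split <;> intro hz <;> linarith
    have habslam : |lam| = ε / 2 := by
      rw [hlamdef]; split
      · exact abs_of_pos (by linarith)
      · rw [abs_neg]; exact abs_of_pos (by linarith)
    have hd₁ : 0 < c₁ * lam := by
      rw [hlamdef]; split
      · exact mul_pos (by assumption) (by linarith)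
      · rename_i hneg
        have : c₁ < 0 := lt_of_le_of_ne (not_lt.mp hneg) hc₁ne
        nlinarith
    have hd₂ : 0 < c₂ * lam := by
      have h2' : 0 < (c₁ * lam) * (c₂ * lam) := by
        have := mul_pos hc (pow_two_pos_of_ne_zero hlamne)
        nlinarith
      rcases mul_pos_iff.mp h2' with ⟨_, hh⟩ | ⟨hh, _⟩
      · exact hh
      · linarith
    have e₁ : T₁ * lam * α₁ = c₁ * lam := by rw [hc₁def]; ring
    have e₂ : T₂ * lam * α₂ = c₂ * lam := by rw [hc₂def]; ring
    have hκ₁pos : 0 < κ₁ lam := by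
      rw [hκ₁ lam hlamne, e₁]
      exact div_pos (by linarith) hd₁
    have hκ₂pos : 0 < κ₂ lam := by
      rw [hκ₂ lam hlamne, e₂]
      exact div_pos (by linarith) hd₂
    have := h lam (by rw [habslam]; linarith) (by rw [habslam]; linarith)
    nlinarith
  · intro hS
    have hc : c₁ * c₂ < 0 := by
      rw [key]
      exact mul_neg_of_neg_of_pos (mul_neg_of_neg_of_pos hS hsq) hα
    have hc₁ne : c₁ ≠ 0 := by
      intro hz; rw [hz, zero_mul] at hc; exact lt_irrefl 0 hc
    have hc₂ne : c₂ ≠ 0 := by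
      intro hz; rw [hz, mul_zero] at hc; exact lt_irrefl 0 hc
    refine ⟨min (A / |c₁|) (B / |c₂|),
      lt_min (div_pos hA (abs_pos.mpr hc₁ne)) (div_pos hB (abs_pos.mpr hc₂ne)), ?_⟩
    intro lam hlam0 hlamε
    have hlamne : lam ≠ 0 := by
      intro hz; rw [hz, abs_zero] at hlam0; exact lt_irrefl 0 hlam0
    have habs₁ : |c₁ * lam| < A := by
      rw [abs_mul]
      calc |c₁| * |lam| < |c₁| * (A / |c₁|) := by
            exact mul_lt_mul_of_pos_left (lt_of_lt_of_le hlamε (min_le_left _ _))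
              (abs_pos.mpr hc₁ne)
        _ = A := by field_simp
    have habs₂ : |c₂ * lam| < B := by
      rw [abs_mul]
      calc |c₂| * |lam| < |c₂| * (B / |c₂|) := by
            exact mul_lt_mul_of_pos_left (lt_of_lt_of_le hlamε (min_le_right _ _))
              (abs_pos.mpr hc₂ne)
        _ = B := by field_simp
    have hnum₁ : 0 < A + c₁ * lam := by
      have := neg_abs_le (c₁ * lam); linarith
    have hnum₂ : 0 < B + c₂ * lam := by
      have := neg_abs_le (c₂ * lam); linarith
    have hden : (c₁ * lam) * (c₂ * lam) < 0 := by
      have := mul_neg_of_neg_of_pos hc (pow_two_pos_of_ne_zero hlamne)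
      nlinarith
    have e₁ : T₁ * lam * α₁ = c₁ * lam := by rw [hc₁def]; ring
    have e₂ : T₂ * lam * α₂ = c₂ * lam := by rw [hc₂def]; ring
    rw [hκ₁ lam hlamne, hκ₂ lam hlamne, e₁, e₂, div_mul_div_comm]
    exact div_neg_of_pos_of_neg (mul_pos hnum₁ hnum₂) hden
end
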